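/- If A ~ B, then A is a ⊤-variant if and only if B is a ⊤-variant (this holds both for ~ being ≅ and for ~ being ≃). -/

import Mathlib

namespace LambdaA

/-! ### Type expressions (de Bruijn representation for `μ`-binders) -/

inductive Ty : Type
  | var : ℕ → Ty
  | arrow : Ty → Ty → Ty
  | box : Ty → Ty
  | mu : Ty → Ty
  deriving DecidableEq

namespace Ty

def rename : (ℕ → ℕ) → Ty → Ty
  | f, var n => var (f n)
  | f, arrow A B => arrow (rename f A) (rename f B)
  | f, box A => box (rename f A)
  | f, mu A => mu (rename (fun n => match n with | 0 => 0 | Nat.succ m => f m + 1) A)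

def shiftUp : Ty → Ty := rename Nat.succ

def subst : (ℕ → Ty) → Ty → Ty
  | σ, var n => σ n
  | σ, arrow A B => arrow (subst σ A) (subst σ B)
  | σ, box A => box (subst σ A)
  | σ, mu A => mu (subst (fun n => match n with | 0 => var 0 | Nat.succ m => shiftUp (σ m)) A)

end Ty

/-- `openT A B`: instantiate the outermost bound variable (index `0`) of the body `A` by `B`. -/
def openT (A B : Ty) : Ty :=
  Ty.subst (fun n => match n with | 0 => B | Nat.succ m => Ty.var m) A

/-- `substFree A X B` is the capture-avoiding substitution `A[B/X]` for the free variable `X`. -/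
def substFree (A : Ty) (X : ℕ) (B : Ty) : Ty :=
  Ty.subst (fun n => if n = X then B else Ty.var n) A

/-- The unfolding `μX.A ↦ A[μX.A/X]` of a recursive type. -/
def unfoldMu (A : Ty) : Ty := openT A (Ty.mu A)

/-- Free occurrence of a type variable in a type expression. -/
def freeInTy : ℕ → Ty → Prop
  | X, .var n => n = X
  | X, .arrow A B => freeInTy X A ∨ freeInTy X B
  | X, .box A => freeInTy X A
  | X, .mu A => freeInTy (X + 1) A

/-- Auxiliary ⊤-variant test.  `tvAux A d t` scans the tail of `A`, where `d` is the number of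
`μ`-binders passed so far and `t` is the number of (outermost) such binders inside which a `•`
has already been encountered.  A variable qualifies iff it is bound by one of the `μ`-binders
and at least one `•` occurs inside that binder. -/
def tvAux : Ty → ℕ → ℕ → Bool
  | .var j, d, t => decide (d - t ≤ j ∧ j < d)
  | .box A, d, _ => tvAux A d d
  | .mu A, d, t => tvAux A (d + 1) t
  | .arrow _ B, d, t => tvAux B d t

/-- `A` is a ⊤-variant. -/
def IsTV (A : Ty) : Prop := tvAux A 0 0 = true

/-- `Proper A X` : the type expression `A` is proper in the (free) variable `X`. -/
def Proper : Ty → ℕ → Prop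
  | .var n, X => n ≠ X
  | .box _, _ => True
  | .arrow A B, X => (Proper A X ∧ Proper B X) ∨ IsTV B
  | .mu A, X => Proper A (X + 1) ∨ IsTV (.mu A)

/-- Well-formed type expressions: every recursive type `μX.A` has `A` proper in `X`. -/
def WF : Ty → Prop
  | .var _ => True
  | .arrow A B => WF A ∧ WF B
  | .box A => WF A
  | .mu A => WF A ∧ Proper A 0

/-- `⊤ = μX.•X`. -/
def tyTop : Ty := .mu (.box (.var 0))

/-- `•ⁿ A`. -/
def boxN (n : ℕ) (A : Ty) : Ty := Ty.box^[n] A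

/-- The equivalences `≅` (`s = false`) and `≃` (`s = true`) on type expressions. -/
inductive TyEq : Bool → Ty → Ty → Prop
  | refl (s : Bool) (A : Ty) : TyEq s A A
  | symm {s : Bool} {A B : Ty} : TyEq s A B → TyEq s B A
  | trans {s : Bool} {A B C : Ty} : TyEq s A B → TyEq s B C → TyEq s A C
  | boxCongr {s : Bool} {A B : Ty} : TyEq s A B → TyEq s (.box A) (.box B)
  | arrowCongr {s : Bool} {A B C D : Ty} :
      TyEq s A C → TyEq s B D → TyEq s (.arrow A B) (.arrow C D)
  | arrowTop (s : Bool) (A : Ty) : TyEq s (.arrow A tyTop) tyTop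
  | fix (s : Bool) (A : Ty) : TyEq s (.mu A) (unfoldMu A)
  | uniq {s : Bool} {A C : Ty} : TyEq s A (openT C A) → Proper C 0 → TyEq s A (.mu C)
  | kl (A B : Ty) : TyEq true (.box (.arrow A B)) (.arrow (.box A) (.box B))

/-! ### Subtyping -/

/-- Subtyping assumptions: finite sets of pairs of type variables. -/
abbrev Assum := Finset (ℕ × ℕ)

/-- Well-formedness of a subtyping assumption: every type variable occurs at most once. -/
def AssumOK (γ : Assum) : Prop :=
  (∀ p ∈ γ, (p : ℕ × ℕ).1 ≠ p.2) ∧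
    ∀ p ∈ γ, ∀ q ∈ γ, p ≠ q →
      (p : ℕ × ℕ).1 ≠ (q : ℕ × ℕ).1 ∧ p.1 ≠ q.2 ∧ p.2 ≠ q.1 ∧ p.2 ≠ q.2

/-- `X` occurs in the subtyping assumption `γ`. -/
def AssumVar (γ : Assum) (X : ℕ) : Prop :=
  ∃ p ∈ γ, (p : ℕ × ℕ).1 = X ∨ (p : ℕ × ℕ).2 = X

/-- Derivability of subtyping judgments `γ ⊢ A ⪯ B`. -/
inductive Sub : Assum → Ty → Ty → Prop
  | assump {γ : Assum} {X Y : ℕ} : AssumOK γ → (X, Y) ∈ γ → Sub γ (.var X) (.var Y)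
  | top {γ : Assum} (A : Ty) : AssumOK γ → Sub γ A tyTop
  | refl {γ : Assum} {A B : Ty} : AssumOK γ → TyEq true A B → Sub γ A B
  | trans {γ₁ γ₂ : Assum} {A B C : Ty} :
      Sub γ₁ A B → Sub γ₂ B C → AssumOK (γ₁ ∪ γ₂) → Sub (γ₁ ∪ γ₂) A C
  | boxMono {γ : Assum} {A B : Ty} : Sub γ A B → Sub γ (.box A) (.box B)
  | arrowMono {γ₁ γ₂ : Assum} {A A' B B' : Ty} :
      Sub γ₁ A' A → Sub γ₂ B B' → AssumOK (γ₁ ∪ γ₂) →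
      Sub (γ₁ ∪ γ₂) (.arrow A B) (.arrow A' B')
  | muMono {γ : Assum} {X Y : ℕ} {A B : Ty} :
      AssumOK (insert (X, Y) γ) →
      Sub (insert (X, Y) γ) (openT A (.var X)) (openT B (.var Y)) →
      ¬ AssumVar γ X → ¬ AssumVar γ Y →
      ¬ freeInTy X (openT B (.var Y)) → ¬ freeInTy Y (openT A (.var X)) →
      Proper (openT A (.var X)) X → Proper (openT B (.var Y)) Y →
      Sub γ (.mu A) (.mu B)
  | approx {γ : Assum} (A : Ty) : AssumOK γ → Sub γ A (.box A)

/-! ### Untyped λ-terms (locally-nameless representation) -/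

inductive Tm : Type
  | bvar : ℕ → Tm
  | fvar : ℕ → Tm
  | lam : Tm → Tm
  | app : Tm → Tm → Tm
  deriving DecidableEq

def openTmAux (N : Tm) : ℕ → Tm → Tm
  | _, .fvar y => .fvar y
  | k, .bvar i => if i = k then N else .bvar i
  | k, .lam M => .lam (openTmAux N (k + 1) M)
  | k, .app M₁ M₂ => .app (openTmAux N k M₁) (openTmAux N k M₂)

/-- Instantiate the outermost bound variable of the body `M` by `N`. -/
def openTm (M N : Tm) : Tm := openTmAux N 0 M

/-- `substTm M x N` is the substitution `M[N/x]` for the free variable `x`. -/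
def substTm : Tm → ℕ → Tm → Tm
  | .bvar i, _, _ => .bvar i
  | .fvar y, x, N => if y = x then N else .fvar y
  | .lam M, x, N => .lam (substTm M x N)
  | .app M₁ M₂, x, N => .app (substTm M₁ x N) (substTm M₂ x N)

/-- Free occurrence of an individual variable in a λ-term. -/
def freeTm : ℕ → Tm → Prop
  | _, .bvar _ => False
  | x, .fvar y => y = x
  | x, .lam M => freeTm x M
  | x, .app M₁ M₂ => freeTm x M₁ ∨ freeTm x M₂

/-- One-step β-reduction. -/
inductive Step : Tm → Tm → Prop
  | beta (M N : Tm) : Step (.app (.lam M) N) (openTm M N)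
  | appL {M M' : Tm} (N : Tm) : Step M M' → Step (.app M N) (.app M' N)
  | appR (M : Tm) {N N' : Tm} : Step N N' → Step (.app M N) (.app M N')
  | lamCongr {M M' : Tm} : Step M M' → Step (.lam M) (.lam M')

/-- `→*β`, the reflexive-transitive closure of β-reduction. -/
def Steps : Tm → Tm → Prop := Relation.ReflTransGen Step

/-- β-convertibility `=β`. -/
inductive BetaEq : Tm → Tm → Prop
  | step {M N : Tm} : Step M N → BetaEq M N
  | refl (M : Tm) : BetaEq M M
  | symm {M N : Tm} : BetaEq M N → BetaEq N M
  | trans {M N K : Tm} : BetaEq M N → BetaEq N K → BetaEq M K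

/-! ### Typing -/

/-- Typing contexts: finite sets of (variable, type) pairs. -/
abbrev Ctx := Finset (ℕ × Ty)

/-- Well-formedness of a typing context (functionality). -/
def CtxOK (Γ : Ctx) : Prop :=
  ∀ p ∈ Γ, ∀ q ∈ Γ, (p : ℕ × Ty).1 = (q : ℕ × Ty).1 → p = q

/-- `•Γ`. -/
def boxCtx (Γ : Ctx) : Ctx := Γ.image fun p => (p.1, Ty.box p.2)

/-- All types in the context are well-formed type expressions. -/
def CtxWF (Γ : Ctx) : Prop := ∀ p ∈ Γ, WF (p : ℕ × Ty).2

/-- The typing system λA. -/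
inductive Typing : Ctx → Tm → Ty → Prop
  | var {Γ : Ctx} {x : ℕ} {A : Ty} : CtxOK Γ → (x, A) ∈ Γ → Typing Γ (.fvar x) A
  | shift {Γ : Ctx} {M : Tm} {A : Ty} : Typing (boxCtx Γ) M (.box A) → Typing Γ M A
  | top {Γ : Ctx} (M : Tm) : CtxOK Γ → Typing Γ M tyTop
  | sub {Γ : Ctx} {M : Tm} {A B : Ty} : Typing Γ M A → Sub ∅ A B → Typing Γ M B
  | lamI {Γ : Ctx} {x : ℕ} {A B : Ty} {M : Tm} :
      ¬ freeTm x M →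
      Typing (insert (x, A) Γ) (openTm M (.fvar x)) B →
      Typing Γ (.lam M) (.arrow A B)
  | appE {Γ₁ Γ₂ : Ctx} {M N : Tm} {A B : Ty} :
      Typing Γ₁ M (.arrow A B) → Typing Γ₂ N A → CtxOK (Γ₁ ∪ Γ₂) →
      Typing (Γ₁ ∪ Γ₂) (.app M N) B

/-! ### Frames, λ-algebras and the semantics of types -/

/-- The accessibility relation is conversely well-founded. -/
def ConverselyWF {W : Type*} (acc : W → W → Prop) : Prop :=
  WellFounded fun q p => acc p q

/-- Local linearity of the accessibility relation. -/
def LocallyLinear {W : Type*} (acc : W → W → Prop) : Prop :=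
  ∀ p q, acc p q → ∃ r, Relation.ReflTransGen acc p r ∧ acc r q ∧
    ∀ s, acc r s → Relation.ReflTransGen acc q s

/-- Hereditary type environments. -/
def Hereditary {W : Type*} {V : Type*} (acc : W → W → Prop) (η : ℕ → W → Set V) : Prop :=
  ∀ X p q, acc p q → η X p ⊆ η X q

/-- Syntactical λ-algebras of the untyped λ-calculus. -/
structure LambdaAlgebra (V : Type*) where
  nonempty : Nonempty V
  ap : V → V → V
  den : Tm → (ℕ → V) → V
  den_fvar : ∀ x ρ, den (.fvar x) ρ = ρ x
  den_app : ∀ M N ρ, den (.app M N) ρ = ap (den M ρ) (den N ρ)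
  den_lam : ∀ M x ρ v, ¬ freeTm x M →
    ap (den (.lam M) ρ) v = den (openTm M (.fvar x)) (Function.update ρ x v)
  den_ext : ∀ M ρ ρ', (∀ x, freeTm x M → ρ x = ρ' x) → den M ρ = den M ρ'
  den_beta : ∀ M N ρ, BetaEq M N → den M ρ = den N ρ

/-- The interpretation `I(A)^η_p` of type expressions over a frame, packaged together with
its defining (recursion) equations. -/
structure Interp (W : Type*) (acc : W → W → Prop) (V : Type*) (ap : V → V → V) where
  I : Ty → (ℕ → W → Set V) → W → Set V
  I_tv : ∀ A η p, WF A → IsTV A → I A η p = Set.univ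
  I_var : ∀ X η p, I (.var X) η p = η X p
  I_box : ∀ A η p, WF A → ¬ IsTV (Ty.box A) →
    I (.box A) η p = {u | ∀ q, acc p q → u ∈ I A η q}
  I_arrow : ∀ A B η p, WF A → WF B → ¬ IsTV (Ty.arrow A B) →
    I (.arrow A B) η p =
      {u | ∀ q, Relation.ReflTransGen acc p q → ∀ v ∈ I A η q, ap u v ∈ I B η q}
  I_mu : ∀ A η p, WF (Ty.mu A) → ¬ IsTV (Ty.mu A) →
    I (.mu A) η p = I (unfoldMu A) η p

/-! ### Tail finiteness and related notions -/

/-- The sets `TF^V`. -/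
inductive TFmem : Set ℕ → Ty → Prop
  | var {V : Set ℕ} {X : ℕ} : X ∉ V → TFmem V (.var X)
  | box {V : Set ℕ} {A : Ty} : TFmem V A → TFmem V (.box A)
  | arrow {V : Set ℕ} (A : Ty) {B : Ty} : TFmem V B → TFmem V (.arrow A B)
  | mu {V : Set ℕ} {A : Ty} : WF (.mu A) → TFmem ({0} ∪ (Nat.succ '' V)) A → TFmem V (.mu A)

/-- Shapes `•^{m₀}(B₁ → •^{m₁}(B₂ → ⋯ → •^{m_{n-1}}(Bₙ → •^{mₙ} X)⋯))`. -/
inductive TFShape : Ty → Prop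
  | var (X : ℕ) : TFShape (.var X)
  | box {A : Ty} : TFShape A → TFShape (.box A)
  | arrow (A : Ty) {B : Ty} : TFShape B → TFShape (.arrow A B)

/-- Tail finite type expressions. -/
def TailFinite (A : Ty) : Prop := ∃ C, TFShape C ∧ WF C ∧ TyEq false A C

-- Effectively occurring type variables, positively (`petv`) and negatively (`netv`).
mutual
  def petv : Ty → Finset ℕ
    | .var X => {X}
    | .box A => if tvAux (.box A) 0 0 then ∅ else petv A
    | .arrow A B => if tvAux (.arrow A B) 0 0 then ∅ else netv A ∪ petv B
    | .mu A =>
        if tvAux (.mu A) 0 0 then ∅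
        else if 0 ∈ netv A then ((petv A ∪ netv A).erase 0).image (· - 1)
        else ((petv A).erase 0).image (· - 1)
  def netv : Ty → Finset ℕ
    | .var _ => ∅
    | .box A => if tvAux (.box A) 0 0 then ∅ else netv A
    | .arrow A B => if tvAux (.arrow A B) 0 0 then ∅ else petv A ∪ netv B
    | .mu A =>
        if tvAux (.mu A) 0 0 then ∅
        else if 0 ∈ netv A then ((netv A ∪ petv A).erase 0).image (· - 1)
        else ((netv A).erase 0).image (· - 1)
end

/-- Positively finite type expressions. -/
def PosFin (A : Ty) : Prop :=
  ∀ (s : Bool) (B C : Ty) (X : ℕ), WF B → WF C →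
    TyEq s A (substFree B X C) → X ∈ petv B → X ∉ netv B → TailFinite C

/-- Negatively finite type expressions. -/
def NegFin (A : Ty) : Prop :=
  ∀ (s : Bool) (B C : Ty) (X : ℕ), WF B → WF C →
    TyEq s A (substFree B X C) → X ∈ netv B → X ∉ petv B → TailFinite C

/-! ### Head normal forms, maximality, normal forms -/

/-- `y N₁ … Nₙ` with every argument satisfying `P`. -/
inductive SpineArgs (P : Tm → Prop) : Tm → Prop
  | fvar (x : ℕ) : SpineArgs P (.fvar x)
  | bvar (i : ℕ) : SpineArgs P (.bvar i)
  | app {M N : Tm} : SpineArgs P M → P N → SpineArgs P (.app M N)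

/-- Head normal forms `λx₁…λxₘ. y N₁ … Nₙ` whose arguments satisfy `P`. -/
inductive HNFP (P : Tm → Prop) : Tm → Prop
  | spine {M : Tm} : SpineArgs P M → HNFP P M
  | lam {M : Tm} : HNFP P M → HNFP P (.lam M)

/-- Head normal forms. -/
def HNF : Tm → Prop := HNFP fun _ => True

/-- Maximality at a given depth. -/
def MaxAt : ℕ → Tm → Prop
  | 0, _ => True
  | n + 1, M => ∃ M', Steps M M' ∧ HNFP (MaxAt n) M'

/-- Maximal λ-terms: the Böhm tree contains no `⊥`. -/
def Maximal (M : Tm) : Prop := ∀ n, MaxAt n M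

/-- β-normal forms. -/
def NormalForm (M : Tm) : Prop := ∀ N, ¬ Step M N

/-- Type expressions without any occurrence of the modal operator `•`. -/
def NoBox : Ty → Prop
  | .var _ => True
  | .arrow A B => NoBox A ∧ NoBox B
  | .box _ => False
  | .mu A => NoBox A

/-! ### The modal logic LAμ and its Kripke semantics -/

/-- The logic LAμ (formulae are type expressions). -/
inductive LAmu : Finset Ty → Ty → Prop
  | assump {Γ : Finset Ty} {A : Ty} : LAmu (insert A Γ) A
  | nec {Γ₁ : Finset Ty} (Γ₂ : Finset Ty) {A : Ty} :
      LAmu Γ₁ A → LAmu (Γ₁.image Ty.box ∪ Γ₂) (.box A)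
  | four {Γ : Finset Ty} {A : Ty} : LAmu Γ (.box A) → LAmu Γ (.box (.box A))
  | impI {Γ : Finset Ty} {A B : Ty} : LAmu (insert A Γ) B → LAmu Γ (.arrow A B)
  | impE {Γ₁ Γ₂ : Finset Ty} {A B : Ty} :
      LAmu Γ₁ (.arrow A B) → LAmu Γ₂ A → LAmu (Γ₁ ∪ Γ₂) B
  | fold {Γ : Finset Ty} {A : Ty} : LAmu Γ (unfoldMu A) → LAmu Γ (.mu A)
  | unfold {Γ : Finset Ty} {A : Ty} : LAmu Γ (.mu A) → LAmu Γ (unfoldMu A)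
  | lrule {Γ : Finset Ty} {A B : Ty} :
      LAmu Γ (.arrow (.box A) (.box B)) → LAmu Γ (.box (.arrow A B))
  | approx {Γ : Finset Ty} {A : Ty} : LAmu Γ A → LAmu Γ (.box A)

/-- The Kripke satisfaction relation over an LA-frame `(W, tri, R)` under a valuation `ξ`,
packaged with its defining (recursion) equations. -/
structure SatFun {W : Type*} (tri R : W → W → Prop) (ξ : ℕ → W → Prop) where
  sat : Ty → W → Prop
  sat_tv : ∀ A p, WF A → IsTV A → sat A p
  sat_var : ∀ X p, sat (.var X) p ↔ ξ X p
  sat_box : ∀ A p, WF A → ¬ IsTV (Ty.box A) →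
    (sat (.box A) p ↔ ∀ q, tri p q → sat A q)
  sat_arrow : ∀ A B p, WF A → WF B → ¬ IsTV (Ty.arrow A B) →
    (sat (.arrow A B) p ↔ ∀ q, R p q → sat A q → sat B q)
  sat_mu : ∀ A p, WF (Ty.mu A) → ¬ IsTV (Ty.mu A) →
    (sat (.mu A) p ↔ sat (unfoldMu A) p)

/-! ### Auxiliary machinery: tail statistics -/

/-- Tail statistics of a type expression: `m` = number of `μ`-binders along the tail,
`j` = de Bruijn index of the tail variable, `c` = number of `•` along the tail,
`b` = `μ`-depth at the last `•` along the tail (if any). -/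
structure St where
  m : ℕ
  j : ℕ
  c : ℕ
  b : Option ℕ

def stats : Ty → St
  | .var j => ⟨0, j, 0, none⟩
  | .arrow _ B => stats B
  | .box A => ⟨(stats A).m, (stats A).j, (stats A).c + 1, some ((stats A).b.getD 0)⟩
  | .mu A => ⟨(stats A).m + 1, (stats A).j, (stats A).c, (stats A).b.map (· + 1)⟩

lemma tvAux_eq (A : Ty) : ∀ d t : ℕ, tvAux A d t =
    decide ((d + (stats A).m) - ((stats A).b.elim t (fun x => d + x)) ≤ (stats A).j ∧
      (stats A).j < d + (stats A).m) := by
  induction A with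
  | var j => intro d t; simp [tvAux, stats]
  | arrow A B ihA ihB => intro d t; simpa [tvAux, stats] using ihB d t
  | box A ih =>
      intro d t
      rw [show tvAux (Ty.box A) d t = tvAux A d d from rfl, ih d d]
      rcases h : (stats A).b with _ | x <;> simp [stats, h]
  | mu A ih =>
      intro d t
      rw [show tvAux (Ty.mu A) d t = tvAux A (d + 1) t from rfl, ih (d + 1) t]
      rw [stats.eq_4 A]; dsimp +instances only
      rcases h : (stats A).b with _ | x <;>
        · simp only [stats, h, Option.elim, Option.map, decide_eq_decide]
          exact decide_eq_decide.2 (by omega)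

lemma b_le_m (A : Ty) : ∀ x, (stats A).b = some x → x ≤ (stats A).m := by
  induction A with
  | var j => simp [stats]
  | arrow A B ihA ihB => simpa [stats] using ihB
  | box A ih =>
      intro x hx
      simp only [stats, Option.some.injEq] at hx ⊢
      rcases h : (stats A).b with _ | y
      · simp [h] at hx; omega
      · have := ih y h; simp [h] at hx; omega
  | mu A ih =>
      intro x hx
      simp only [stats] at hx ⊢
      rcases h : (stats A).b with _ | y <;> simp [h] at hx
      have := ih y h; omega

lemma b_none_iff_c (A : Ty) : (stats A).b = none ↔ (stats A).c = 0 := by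
  induction A with
  | var j => simp [stats]
  | arrow A B ihA ihB => simpa [stats] using ihB
  | box A ih => simp [stats]
  | mu A ih =>
      rcases h : (stats A).b with _ | y <;> simp [stats, h] <;>
        simpa [h] using ih

/-- Combination of tail statistics under substitution. -/
def St.comb (s t : St) : St :=
  if s.j < s.m then s
  else ⟨s.m + t.m, if t.j < t.m then t.j else t.j + s.m, s.c + t.c,
        t.b.elim s.b (fun x => some (s.m + x))⟩

lemma stats_rename (A : Ty) : ∀ f : ℕ → ℕ, stats (Ty.rename f A) =
    ⟨(stats A).m,
     if (stats A).j < (stats A).m then (stats A).j else f ((stats A).j - (stats A).m) + (stats A).m,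
     (stats A).c, (stats A).b⟩ := by
  induction A with
  | var j => intro f; simp [Ty.rename, stats]
  | arrow A B ihA ihB => intro f; rw [stats.eq_2 A B]; simpa [Ty.rename, stats] using ihB f
  | box A ih =>
      intro f
      rw [show Ty.rename f (Ty.box A) = Ty.box (Ty.rename f A) from rfl]
      rw [stats.eq_3 A]
      simp only [stats, ih f]
  | mu A ih =>
      intro f
      rw [show Ty.rename f (Ty.mu A) =
        Ty.mu (Ty.rename (fun n => match n with | 0 => 0 | Nat.succ m => f m + 1) A) from rfl]
      rw [stats.eq_4 A]; dsimp +instances only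
      simp only [stats, ih]
      rcases Nat.lt_trichotomy (stats A).j (stats A).m with h | h | h
      · simp [if_pos h, if_pos (by omega : (stats A).j < (stats A).m + 1), (by omega : (stats A).j ≤ (stats A).m)]
      · have h0 : (stats A).j - (stats A).m = 0 := by omega
        simp [if_neg (by omega : ¬ (stats A).j < (stats A).m), h0,
          if_pos (by omega : (stats A).j < (stats A).m + 1), (by omega : (stats A).j ≤ (stats A).m)]
        omega
      · have h0 : (stats A).j - (stats A).m = ((stats A).j - ((stats A).m + 1)) + 1 := by omega
        simp [if_neg (by omega : ¬ (stats A).j < (stats A).m), h0,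
          if_neg (by omega : ¬ (stats A).j < (stats A).m + 1), (by omega : ¬ (stats A).j ≤ (stats A).m)]
        split_ifs <;> omega

lemma stats_subst (A : Ty) : ∀ σ : ℕ → Ty, stats (Ty.subst σ A) =
    (stats A).comb (stats (σ ((stats A).j - (stats A).m))) := by
  induction A with
  | var j =>
      intro σ
      rw [show Ty.subst σ (Ty.var j) = σ j from rfl]
      rw [stats.eq_1 j]
      simp only [stats, St.comb, if_neg (by omega : ¬ j < 0), Nat.sub_zero]
      rcases hs : stats (σ j) with ⟨tm, tj, tc, tb⟩
      rcases tb with _ | x <;> simp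
  | arrow A B ihA ihB => intro σ; simpa [Ty.subst, stats] using ihB σ
  | box A ih =>
      intro σ
      rw [show Ty.subst σ (Ty.box A) = Ty.box (Ty.subst σ A) from rfl]
      rw [stats.eq_3 A]
      simp only [stats, ih σ, St.comb]
      by_cases h : (stats A).j < (stats A).m
      · simp [h, stats]
      · simp only [if_neg h, stats]
        rcases hb : (stats (σ ((stats A).j - (stats A).m))).b with _ | x <;>
          · simp [hb]; omega
  | mu A ih =>
      intro σ
      rw [show Ty.subst σ (Ty.mu A) =
        Ty.mu (Ty.subst (fun n => match n with | 0 => Ty.var 0 | Nat.succ m => Ty.shiftUp (σ m)) A)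
        from rfl]
      rw [stats.eq_4 A]; dsimp +instances only
      simp only [stats, ih, St.comb]
      rcases Nat.lt_trichotomy (stats A).j (stats A).m with h | h | h
      · simp [if_pos h, if_pos (by omega : (stats A).j < (stats A).m + 1), (by omega : (stats A).j ≤ (stats A).m), stats]
      · have h0 : (stats A).j - (stats A).m = 0 := by omega
        simp [if_neg (by omega : ¬ (stats A).j < (stats A).m), h0,
          if_pos (by omega : (stats A).j < (stats A).m + 1), (by omega : (stats A).j ≤ (stats A).m), stats]
        omega
      · have h0 : (stats A).j - (stats A).m = ((stats A).j - ((stats A).m + 1)) + 1 := by omega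
        simp only [if_neg (by omega : ¬ (stats A).j < (stats A).m), h0,
          if_neg (by omega : ¬ (stats A).j < (stats A).m + 1)]
        rw [show Ty.shiftUp = Ty.rename Nat.succ from rfl, stats_rename]
        set t := stats (σ ((stats A).j - ((stats A).m + 1))) with ht
        by_cases htj : t.j < t.m
        · rcases hb : t.b with _ | x <;>
            simp [htj, hb, St.mk.injEq] <;> omega
        · have h1 : ¬ (Nat.succ (t.j - t.m) + t.m < t.m) := by omega
          rcases hb : t.b with _ | x <;>
            simp [htj, hb, h1, St.mk.injEq] <;> omega

/-- Tail behaviour of a type expression under infinite unfolding: either infinitely many `•`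
along the tail (a ⊤-variant), or termination at a free variable `X` after `c` boxes, or
divergence after `c` boxes. -/
inductive Beh
  | inf : Beh
  | fin : ℕ → ℕ → Beh
  | div : ℕ → Beh

def St.beh (t : St) : Beh :=
  if t.m ≤ t.j then .fin t.c (t.j - t.m)
  else t.b.elim (.div t.c) (fun x => if t.m - x ≤ t.j then .inf else .div t.c)

def beh (A : Ty) : Beh := (stats A).beh

lemma isTV_iff (A : Ty) : IsTV A ↔ beh A = .inf := by
  rw [IsTV, tvAux_eq A 0 0, beh]
  rcases hb : (stats A).b with _ | x <;>
    · simp only [St.beh, hb, Option.elim, decide_eq_true_eq, zero_add]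
      split_ifs <;> first | (simp <;> omega) | omega | simp

lemma isTV_j_lt {A : Ty} (h : IsTV A) : (stats A).j < (stats A).m := by
  rw [IsTV, tvAux_eq A 0 0] at h
  simp only [decide_eq_true_eq] at h
  omega

lemma proper_b (C : Ty) : ∀ X, Proper C X → (stats C).j = X + (stats C).m →
    ∃ x, (stats C).b = some x := by
  induction C with
  | var n =>
      intro X hP hj
      simp only [stats] at hj
      simp only [Proper] at hP
      exact absurd (by omega : n = X) hP
  | box A ih => intro X _ _; exact ⟨(stats A).b.getD 0, rfl⟩
  | arrow A B ihA ihB =>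
      intro X hP hj
      simp only [Proper] at hP
      rcases hP with ⟨_, hPB⟩ | hTV
      · exact ihB X hPB hj
      · have := isTV_j_lt hTV
        simp only [show stats (Ty.arrow A B) = stats B from rfl] at hj
        omega
  | mu A ih =>
      intro X hP hj
      simp only [Proper] at hP
      simp only [stats] at hj ⊢
      rcases hP with hPA | hTV
      · obtain ⟨x, hx⟩ := ih (X + 1) hPA (by omega)
        exact ⟨x + 1, by simp [hx]⟩
      · have := isTV_j_lt hTV
        simp only [stats] at this
        omega

lemma beh_box (A : Ty) : beh (.box A) =
    (match beh A with
     | .inf => .inf | .fin c X => .fin (c + 1) X | .div c => .div (c + 1)) := by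
  rw [beh, beh]
  rcases hb : (stats A).b with _ | x <;>
    · simp only [stats, St.beh, hb, Option.elim, Option.getD]
      split_ifs <;> first | rfl | (exfalso; omega) | (simp <;> omega) | simp | omega

lemma beh_fix (A : Ty) : beh (Ty.mu A) = beh (unfoldMu A) := by
  rw [beh, beh, unfoldMu, openT, stats_subst]
  rcases Nat.lt_trichotomy (stats A).j (stats A).m with h | h | h
  · rw [St.comb, if_pos h]
    rcases hb : (stats A).b with _ | x <;>
      · simp only [stats, St.beh, hb, Option.elim, Option.map]
        split_ifs <;> first | rfl | (exfalso; omega) | (simp <;> omega) | simp | omega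
  · rw [St.comb, if_neg (by omega)]
    have h0 : (stats A).j - (stats A).m = 0 := by omega
    simp only [h0]
    rcases hb : (stats A).b with _ | x
    · have hc0 : (stats A).c = 0 := (b_none_iff_c A).1 hb
      simp only [stats, St.beh, hb, Option.elim, Option.map]
      split_ifs <;> first | rfl | (exfalso; omega) | (simp <;> omega) | simp | omega
    · simp only [stats, St.beh, hb, Option.elim, Option.map]
      split_ifs <;> first | rfl | (exfalso; omega) | (simp <;> omega) | simp | omega
  · rw [St.comb, if_neg (by omega)]
    have h0 : (stats A).j - (stats A).m = ((stats A).j - ((stats A).m + 1)) + 1 := by omega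
    simp only [h0]
    rcases hb : (stats A).b with _ | x <;>
      · simp only [stats, St.beh, hb, Option.elim, Option.map]
        split_ifs <;> first | rfl | (exfalso; omega) | (simp <;> omega) | simp | omega

lemma beh_uniq {A C : Ty} (hP : Proper C 0) (ih : beh A = beh (openT C A)) :
    beh A = beh (Ty.mu C) := by
  rw [beh, beh, openT, stats_subst] at ih
  rw [beh, beh]
  rcases Nat.lt_trichotomy (stats C).j (stats C).m with h | h | h
  · rw [St.comb, if_pos h] at ih
    rw [ih]
    rcases hb : (stats C).b with _ | x <;>
      · simp only [stats, St.beh, hb, Option.elim, Option.map]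
        split_ifs <;> first | rfl | (exfalso; omega) | (simp <;> omega) | simp | omega
  · obtain ⟨x, hx⟩ := proper_b C 0 hP (by omega)
    have hxm : x ≤ (stats C).m := b_le_m C x hx
    have hcC : (stats C).c ≠ 0 := by
      intro h0
      rw [← b_none_iff_c] at h0
      rw [h0] at hx; exact nomatch hx
    rw [St.comb, if_neg (by omega)] at ih
    have h0 : (stats C).j - (stats C).m = 0 := by omega
    simp only [h0] at ih
    rcases hbA : (stats A).b with _ | y <;>
      · have hcA := b_none_iff_c A
        rw [hbA] at hcA
        simp only [stats, St.beh, hbA, hx, Option.elim, Option.map] at ih ⊢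
        split_ifs at ih ⊢ <;>
          first
            | rfl
            | (exfalso; omega)
            | (exfalso; exact Beh.noConfusion ih)
            | (simp only [Beh.fin.injEq, Beh.div.injEq] at ih ⊢ <;> omega)
            | (exfalso; simp only [Beh.fin.injEq, Beh.div.injEq] at ih; omega)
            | (simp at ih ⊢ <;> omega)
            | omega
  · rw [St.comb, if_neg (by omega)] at ih
    have h0 : (stats C).j - (stats C).m = ((stats C).j - ((stats C).m + 1)) + 1 := by omega
    simp only [h0] at ih
    rw [ih]
    rcases hb : (stats C).b with _ | x <;>
      · simp only [stats, St.beh, hb, Option.elim, Option.map]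
        split_ifs <;> first | rfl | (exfalso; omega) | (simp <;> omega) | simp | omega

lemma beh_eq_of_tyEq {s : Bool} {A B : Ty} (h : TyEq s A B) : beh A = beh B := by
  induction h with
  | refl => rfl
  | symm _ ih => exact ih.symm
  | trans _ _ ih₁ ih₂ => exact ih₁.trans ih₂
  | boxCongr _ ih => rw [beh_box, beh_box, ih]
  | arrowCongr _ _ ih₁ ih₂ => exact ih₂
  | arrowTop s A => rfl
  | fix s A => exact beh_fix A
  | uniq _ hP ih => exact beh_uniq hP ih
  | kl A B => rfl

/-- Equivalent type expressions are ⊤-variants simultaneously (both for `≅` and `≃`). -/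
theorem statement14 (s : Bool) (A B : Ty) (hA : WF A) (hB : WF B)
    (hAB : TyEq s A B) : (IsTV A ↔ IsTV B) := by
  rw [isTV_iff, isTV_iff, beh_eq_of_tyEq hAB]

end LambdaA
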